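/- For m ≥ 3, define polynomials D_m in ℤ[t] by the recursion D_m = T_1·D_{m-1} − T_2²·D_{m-2}, where T_1 = 1 − t + t² − t³ and T_2 = t² − t, with initial values D_1 = T_1 and D_2 = T_1² − T_2². Then D_m = (1−t)^m·(1−t^{2m+2})/(1−t²) for all m ≥ 1; equivalently (1−t²)·D_m = (1−t)^m·(1−t^{2m+2}). -/
import Mathlib


open Polynomial

/-- For the sequence `D` of polynomials over ℤ defined by
`D 1 = T₁`, `D 2 = T₁² − T₂²` and `D m = T₁·D (m−1) − T₂²·D (m−2)` for `m ≥ 3`,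
where `T₁ = 1 − t + t² − t³` and `T₂ = t² − t`, one has
`(1 − t²)·D m = (1 − t)^m·(1 − t^{2m+2})` for all `m ≥ 1`. -/
theorem stmt0 (D : ℕ → Polynomial ℤ)
    (h1 : D 1 = 1 - X + X ^ 2 - X ^ 3)
    (h2 : D 2 = (1 - X + X ^ 2 - X ^ 3) ^ 2 - (X ^ 2 - X) ^ 2)
    (hrec : ∀ m, 3 ≤ m →
      D m = (1 - X + X ^ 2 - X ^ 3) * D (m - 1) - (X ^ 2 - X) ^ 2 * D (m - 2)) :
    ∀ m, 1 ≤ m → (1 - X ^ 2) * D m = (1 - X) ^ m * (1 - X ^ (2 * m + 2)) := by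
  intro m hm
  induction m using Nat.strong_induction_on with
  | _ m ih =>
    match m, hm with
    | 1, _ => rw [h1]; ring
    | 2, _ => rw [h2]; ring
    | (n+3), _ =>
      have e := hrec (n+3) (by omega)
      simp only [Nat.add_sub_cancel, show n+3-1 = n+2 from rfl, show n+3-2 = n+1 from rfl] at e
      have ih1 := ih (n+2) (by omega) (by omega)
      have ih2 := ih (n+1) (by omega) (by omega)
      have key : (1 - X^2) * D (n+3) =
          (1 - X + X^2 - X^3) * ((1 - X^2) * D (n+2))
            - (X^2 - X)^2 * ((1 - X^2) * D (n+1)) := by rw [e]; ring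
      rw [key, ih1, ih2]
      ring
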